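/- For any finite list I = ⟨a_1,…,a_n⟩ of item sizes a_i ∈ (0,1] and any packing of I into m unit-capacity bins, 2·m ≥ 2·|I_XL| + |I_M| + |I_L|. In particular, OPT(I) ≥ |I_XL| + (|I_M| + |I_L|)/2. -/

import Mathlib

/-- A packing of the list `I` of item sizes into `m` unit-capacity bins:
an assignment of item indices to bins such that each bin's contents sum to at most 1. -/
def IsPacking (I : List ℝ) (m : ℕ) (f : Fin I.length → Fin m) : Prop :=
  ∀ b : Fin m, ∑ i ∈ Finset.univ.filter (fun i => f i = b), I.get i ≤ 1

/-- `OPT I` is the minimum number of unit-capacity bins needed to pack `I`. -/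
noncomputable def OPT (I : List ℝ) : ℕ :=
  sInf {m | ∃ f : Fin I.length → Fin m, IsPacking I m f}

lemma countP_eq_sum_fin (l : List ℝ) (p : ℝ → Bool) :
    l.countP p = ∑ i : Fin l.length, if p (l.get i) then 1 else 0 := by
  induction l with
  | nil => simp
  | cons a t ih =>
    rw [List.countP_cons]
    rw [show (∑ i : Fin (a :: t).length, if p ((a :: t).get i) then 1 else 0)
        = ∑ i : Fin (t.length + 1), if p ((a :: t).get i) then 1 else 0 from rfl,
      Fin.sum_univ_succ]
    simp [ih, Nat.add_comm]
    by_cases h : p a <;> simp [h]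

lemma key (I : List ℝ) (hI : ∀ a ∈ I, 0 < a ∧ a ≤ 1)
    (m : ℕ) (f : Fin I.length → Fin m) (hf : IsPacking I m f) :
    2 * I.countP (fun a => decide (2/3 ≤ a))
      + I.countP (fun a => decide (1/3 < a ∧ a ≤ 1/2))
      + I.countP (fun a => decide (1/2 < a ∧ a < 2/3)) ≤ 2 * m := by
  have hpos : ∀ i : Fin I.length, 0 < I.get i := fun i => (hI _ (List.getElem_mem i.2)).1
  -- rewrite counts as sums of indicators over indices
  rw [countP_eq_sum_fin, countP_eq_sum_fin, countP_eq_sum_fin]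
  have hw : ∀ i : Fin I.length,
      2 * (if decide ((2:ℝ)/3 ≤ I.get i) then 1 else 0)
        + (if decide ((1:ℝ)/3 < I.get i ∧ I.get i ≤ 1/2) then 1 else 0)
        + (if decide ((1:ℝ)/2 < I.get i ∧ I.get i < 2/3) then 1 else 0)
      = (if (2:ℝ)/3 ≤ I.get i then 1 else 0) + (if (1:ℝ)/3 < I.get i then 1 else 0) := by
    intro i
    set a := I.get i with ha
    simp only [decide_eq_true_eq]
    by_cases h1 : (2:ℝ)/3 ≤ a
    · rw [if_pos h1, if_pos (show (1:ℝ)/3 < a by linarith),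
        if_neg (show ¬((1:ℝ)/3 < a ∧ a ≤ 1/2) from fun hh => by linarith [hh.2]),
        if_neg (show ¬((1:ℝ)/2 < a ∧ a < 2/3) from fun hh => by linarith [hh.2])]
    · push_neg at h1
      rw [if_neg (not_le.mpr h1)]
      by_cases h3 : (1:ℝ)/3 < a
      · rw [if_pos h3]
        by_cases h2 : a ≤ 1/2
        · rw [if_pos ⟨h3, h2⟩,
            if_neg (show ¬((1:ℝ)/2 < a ∧ a < 2/3) from fun hh => by linarith [hh.1])]
        · push_neg at h2
          rw [if_neg (show ¬((1:ℝ)/3 < a ∧ a ≤ 1/2) from fun hh => by linarith [hh.2]),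
            if_pos ⟨h2, h1⟩]
      · push_neg at h3
        rw [if_neg (not_lt.mpr h3),
          if_neg (show ¬((1:ℝ)/3 < a ∧ a ≤ 1/2) from fun hh => by linarith [hh.1]),
          if_neg (show ¬((1:ℝ)/2 < a ∧ a < 2/3) from fun hh => by linarith [hh.1])]
  calc 2 * (∑ i : Fin I.length, if decide ((2:ℝ)/3 ≤ I.get i) then 1 else 0)
        + (∑ i : Fin I.length, if decide ((1:ℝ)/3 < I.get i ∧ I.get i ≤ 1/2) then 1 else 0)
        + (∑ i : Fin I.length, if decide ((1:ℝ)/2 < I.get i ∧ I.get i < 2/3) then 1 else 0)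
      = ∑ i : Fin I.length,
          ((if (2:ℝ)/3 ≤ I.get i then 1 else 0) + (if (1:ℝ)/3 < I.get i then 1 else 0)) := by
        rw [Finset.mul_sum, ← Finset.sum_add_distrib, ← Finset.sum_add_distrib]
        exact Finset.sum_congr rfl fun i _ => hw i
    _ = ∑ b : Fin m, ∑ i ∈ Finset.univ.filter (fun i => f i = b),
          ((if (2:ℝ)/3 ≤ I.get i then 1 else 0) + (if (1:ℝ)/3 < I.get i then 1 else 0)) := by
        rw [Finset.sum_fiberwise]
    _ ≤ ∑ _b : Fin m, 2 := by
        apply Finset.sum_le_sum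
        intro b _
        set S := Finset.univ.filter (fun i => f i = b) with hS
        have hsum : ∑ i ∈ S, I.get i ≤ 1 := hf b
        set T := S.filter (fun i => (1:ℝ)/3 < I.get i) with hT
        set X := S.filter (fun i => (2:ℝ)/3 ≤ I.get i) with hX
        have hXT : X ⊆ T := by
          intro i hi
          simp only [hX, hT, Finset.mem_filter] at *
          exact ⟨hi.1, by linarith [hi.2]⟩
        have hTsum : ∑ i ∈ T, I.get i ≤ 1 :=
          le_trans (Finset.sum_le_sum_of_subset_of_nonneg (Finset.filter_subset _ _)
            (fun i _ _ => (hpos i).le)) hsum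
        have hTcard : T.card ≤ 2 := by
          by_contra hc
          push_neg at hc
          have hne : T.Nonempty := Finset.card_pos.mp (by omega)
          have : (T.card : ℝ) * (1/3) < ∑ i ∈ T, I.get i := by
            have := Finset.sum_lt_sum_of_nonempty hne
              (f := fun _ => (1:ℝ)/3) (g := fun i => I.get i)
              (fun i hi => (Finset.mem_filter.mp hi).2)
            simpa [Finset.sum_const, nsmul_eq_mul] using this
          have h3 : (3:ℝ) ≤ (T.card : ℝ) := by exact_mod_cast hc
          nlinarith
        have hmain : X.card + T.card ≤ 2 := by
          rcases X.eq_empty_or_nonempty with he | ⟨x, hx⟩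
          · simp [he]; omega
          · have hxT : x ∈ T := hXT hx
            have hT1 : T.card ≤ 1 := by
              by_contra hc
              push_neg at hc
              obtain ⟨t, htT, htx⟩ := Finset.exists_mem_ne hc x
              have hxs : (2:ℝ)/3 ≤ I.get x := (Finset.mem_filter.mp hx).2
              have hts : (1:ℝ)/3 < I.get t := (Finset.mem_filter.mp htT).2
              have hpair : I.get t + I.get x ≤ ∑ i ∈ T, I.get i := by
                have : ({t, x} : Finset (Fin I.length)) ⊆ T := by
                  intro i hi
                  rcases Finset.mem_insert.mp hi with rfl | hi
                  · exact htT
                  · rw [Finset.mem_singleton.mp hi]; exact hxT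
                calc I.get t + I.get x = ∑ i ∈ ({t, x} : Finset (Fin I.length)), I.get i := by
                      rw [Finset.sum_pair htx]
                  _ ≤ ∑ i ∈ T, I.get i :=
                      Finset.sum_le_sum_of_subset_of_nonneg this (fun i _ _ => (hpos i).le)
              linarith
            have := Finset.card_le_card hXT
            omega
        calc ∑ i ∈ S, ((if (2:ℝ)/3 ≤ I.get i then 1 else 0)
                + (if (1:ℝ)/3 < I.get i then 1 else 0))
            = X.card + T.card := by
              rw [Finset.sum_add_distrib]
              congr 1 <;> exact (Finset.card_filter _ _).symm
          _ ≤ 2 := hmain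
    _ = 2 * m := by simp [Finset.sum_const, mul_comm]

/-- For any packing of `I` into `m` unit-capacity bins, `2·m ≥ 2·|I_XL| + |I_M| + |I_L|`;
in particular `OPT(I) ≥ |I_XL| + (|I_M| + |I_L|)/2`. -/
theorem opt_ge_XL_add_half_M_add_L (I : List ℝ) (hI : ∀ a ∈ I, 0 < a ∧ a ≤ 1)
    (m : ℕ) (f : Fin I.length → Fin m) (hf : IsPacking I m f) :
    2 * I.countP (fun a => decide (2/3 ≤ a))
      + I.countP (fun a => decide (1/3 < a ∧ a ≤ 1/2))
      + I.countP (fun a => decide (1/2 < a ∧ a < 2/3)) ≤ 2 * m ∧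
    (I.countP (fun a => decide (2/3 ≤ a)) : ℝ)
      + ((I.countP (fun a => decide (1/3 < a ∧ a ≤ 1/2))
          + I.countP (fun a => decide (1/2 < a ∧ a < 2/3)) : ℕ) : ℝ) / 2
      ≤ (OPT I : ℝ) := by
  refine ⟨key I hI m f hf, ?_⟩
  have hne : {m | ∃ f : Fin I.length → Fin m, IsPacking I m f}.Nonempty := ⟨m, f, hf⟩
  obtain ⟨g, hg⟩ := Nat.sInf_mem hne
  have h2 := key I hI (OPT I) g hg
  have := (Nat.cast_le (α := ℝ)).mpr h2
  push_cast at this ⊢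
  linarith
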